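/- arXiv:2306.00726 — 2 statements merged into one kernel-verified Lean document; each statement's English description precedes it below -/
import Mathlib

section
/- In the graph G constructed from a Set Cover instance, let A' ⊆ A be feasible, let 𝒞 := {S ∈ 𝒮 | P_S ⊆ A'}, and define the 'purified' arc set A'' := {(v_u, v^0_S) ∈ A' | S ∈ 𝒞} ∪ ⋃_{S ∈ 𝒞} P_S. Then A'' ⊆ A', A'' is feasible, every path P_S is either entirely contained in A'' or disjoint from A'', and for every linecard size k ≥ 1 one has obj_k(A'') ≤ obj_k(A'). -/
/-- Vertices of the graph constructed from a Set Cover instance with universe `U`,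
family of sets indexed by `ι`, and path-length parameter `q`:
`item u` is `v_u`, `path i j` is `v^j_{S_i}`, and `sink` is `z`. -/
inductive Vtx (U ι : Type) (q : ℕ) : Type where
  | item : U → Vtx U ι q
  | path : ι → Fin (q + 1) → Vtx U ι q
  | sink : Vtx U ι q
  deriving DecidableEq, Fintype

variable {U ι : Type} [Fintype U] [Fintype ι] [DecidableEq U] [DecidableEq ι]

/-- The arcs `A_U = {(v_u, v^0_S) | S ∈ 𝒮, u ∈ S}`. -/
def AU (Sets : ι → Finset U) (q : ℕ) : Finset (Vtx U ι q × Vtx U ι q) :=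
  Finset.univ.biUnion fun i => (Sets i).image fun u => (Vtx.item u, Vtx.path i 0)

/-- The path `P_S = {(v^0_S,v^1_S), …, (v^{q-1}_S,v^q_S), (v^q_S, z)}` for `S = S_i`. -/
def Ppath (U ι : Type) [DecidableEq U] [DecidableEq ι] (q : ℕ) (i : ι) :
    Finset (Vtx U ι q × Vtx U ι q) :=
  ((Finset.univ : Finset (Fin q)).image fun j =>
      ((Vtx.path i j.castSucc : Vtx U ι q), Vtx.path i j.succ)) ∪
    {(Vtx.path i (Fin.last q), Vtx.sink)}

/-- The arc set `A = A_U ∪ ⋃_{S ∈ 𝒮} P_S`. -/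
def arcs (Sets : ι → Finset U) (q : ℕ) : Finset (Vtx U ι q × Vtx U ι q) :=
  AU Sets q ∪ Finset.univ.biUnion (Ppath U ι q)

/-- There is a directed path from `x` to `y` all of whose arcs lie in `A'`. -/
def Reaches {α : Type} (A' : Finset (α × α)) (x y : α) : Prop :=
  Relation.ReflTransGen (fun a b => (a, b) ∈ A') x y

/-- `A' ⊆ A` is feasible if every `v_u` can reach `z` using only arcs of `A'`. -/
def Feasible {q : ℕ} (A' : Finset (Vtx U ι q × Vtx U ι q)) : Prop :=
  ∀ u : U, Reaches A' (Vtx.item u) Vtx.sink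

/-- The number of arcs of `B` incident to `v` (in-degree plus out-degree). -/
def deg {α : Type} [DecidableEq α] (B : Finset (α × α)) (v : α) : ℕ :=
  (B.filter fun a => a.1 = v).card + (B.filter fun a => a.2 = v).card

/-- The linecard objective `obj_k(B) = Σ_v ⌈deg_B(v)/k⌉`. -/
def obj {α : Type} [Fintype α] [DecidableEq α] (k : ℕ) (B : Finset (α × α)) : ℕ :=
  ∑ v : α, deg B v ⌈/⌉ k

set_option linter.unusedSectionVars false

lemma mem_Ppath {q : ℕ} {i : ι} {a : Vtx U ι q × Vtx U ι q} :
    a ∈ Ppath U ι q i ↔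
      (∃ j : Fin q, a = (Vtx.path i j.castSucc, Vtx.path i j.succ)) ∨
      a = (Vtx.path i (Fin.last q), Vtx.sink) := by
  simp [Ppath, eq_comm]
  exact or_comm

lemma Ppath_fst {q : ℕ} {i : ι} {a : Vtx U ι q × Vtx U ι q} (h : a ∈ Ppath U ι q i) :
    ∃ j : Fin (q+1), a.1 = Vtx.path i j := by
  rcases mem_Ppath.1 h with ⟨j, rfl⟩ | rfl
  · exact ⟨j.castSucc, rfl⟩
  · exact ⟨Fin.last q, rfl⟩

lemma tail_in {Sets : ι → Finset U} {q : ℕ} {A' : Finset (Vtx U ι q × Vtx U ι q)}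
    (hA' : A' ⊆ arcs Sets q) {x : Vtx U ι q}
    (hreach : Reaches A' x Vtx.sink) :
    ∀ i (j : Fin (q+1)), x = Vtx.path i j →
      (∀ j' : Fin q, j ≤ j'.castSucc →
        (Vtx.path i j'.castSucc, Vtx.path i j'.succ) ∈ A') ∧
      (Vtx.path i (Fin.last q), Vtx.sink) ∈ A' := by
  induction hreach using Relation.ReflTransGen.head_induction_on with
  | refl => intro i j h; exact absurd h (by simp)
  | head hab _ ih =>
    rename_i a c _
    intro i j hx
    subst hx
    have hmem := hA' hab
    simp only [arcs, Finset.mem_union, AU, Finset.mem_biUnion, Finset.mem_univ, true_and,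
      Finset.mem_image] at hmem
    rcases hmem with ⟨i', u, _, heq⟩ | ⟨i', hP⟩
    · exact absurd (congrArg Prod.fst heq) (by simp)
    · rcases mem_Ppath.1 hP with ⟨j₀, heq⟩ | heq
      · simp only [Prod.ext_iff, Vtx.path.injEq] at heq
        obtain ⟨⟨rfl, rfl⟩, rfl⟩ := heq
        obtain ⟨ih1, ih2⟩ := ih i j₀.succ rfl
        refine ⟨fun j'' hle => ?_, ih2⟩
        rcases eq_or_lt_of_le hle with heq' | hlt
        · have : j₀ = j'' := by
            apply Fin.ext
            have := congrArg Fin.val heq'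
            simpa using this
          subst this
          exact hab
        · apply ih1
          have h1 : (j₀ : ℕ) < (j'' : ℕ) := Fin.castSucc_lt_castSucc_iff.mp hlt
          simp only [Fin.le_def, Fin.val_succ, Fin.coe_castSucc]
          omega
      · simp only [Prod.ext_iff, Vtx.path.injEq] at heq
        obtain ⟨⟨rfl, rfl⟩, rfl⟩ := heq
        refine ⟨fun j'' hle => absurd hle ?_, hab⟩
        simp only [Fin.le_def, Fin.val_last, Fin.coe_castSucc, not_le]
        exact j''.isLt

lemma reach_along {q : ℕ} {B : Finset (Vtx U ι q × Vtx U ι q)} {i : ι}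
    (h : Ppath U ι q i ⊆ B) (j : Fin (q+1)) :
    Reaches B (Vtx.path i j) Vtx.sink := by
  have key : ∀ n (j : Fin (q+1)), q - (j : ℕ) ≤ n → Reaches B (Vtx.path i j) Vtx.sink := by
    intro n
    induction n with
    | zero =>
      intro j hj
      have : (j : ℕ) = q := by have := j.isLt; omega
      have hj' : j = Fin.last q := Fin.ext (by simpa using this)
      subst hj'
      exact Relation.ReflTransGen.single (h (mem_Ppath.2 (Or.inr rfl)))
    | succ n ihn =>
      intro j hj
      by_cases hq : (j : ℕ) = q
      · have hj' : j = Fin.last q := Fin.ext (by simpa using hq)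
        subst hj'
        exact Relation.ReflTransGen.single (h (mem_Ppath.2 (Or.inr rfl)))
      · have hlt : (j : ℕ) < q := by have := j.isLt; omega
        set j₀ : Fin q := ⟨(j : ℕ), hlt⟩ with hj₀
        have hjc : j = j₀.castSucc := Fin.ext rfl
        have harc : (Vtx.path i j₀.castSucc, Vtx.path i j₀.succ) ∈ B :=
          h (mem_Ppath.2 (Or.inl ⟨j₀, rfl⟩))
        rw [hjc]
        exact Relation.ReflTransGen.head harc (ihn j₀.succ (by
          have h1 : ((j₀.succ : Fin (q+1)) : ℕ) = ((j₀.castSucc : Fin (q+1)) : ℕ) + 1 := rfl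
          have h2 : ((j₀.castSucc : Fin (q+1)) : ℕ) = (j : ℕ) := rfl
          rw [h1]; omega))
  exact key _ j le_rfl

/-- In the graph `G` constructed from a Set Cover instance, let `A' ⊆ A` be feasible, let
`𝒞 := {S ∈ 𝒮 | P_S ⊆ A'}`, and define the purified arc set
`A'' := {(v_u, v^0_S) ∈ A' | S ∈ 𝒞} ∪ ⋃_{S ∈ 𝒞} P_S`. Then `A'' ⊆ A'`, `A''` is feasible,
every path `P_S` is either entirely contained in `A''` or disjoint from `A''`, and for every
linecard size `k ≥ 1` one has `obj_k(A'') ≤ obj_k(A')`. -/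
theorem purification (Sets : ι → Finset U) (q : ℕ)
    (A' : Finset (Vtx U ι q × Vtx U ι q)) (hA' : A' ⊆ arcs Sets q)
    (hfeas : Feasible A')
    (A'' : Finset (Vtx U ι q × Vtx U ι q))
    (hA'' : A'' =
      (A'.filter fun a => ∃ i : ι, Ppath U ι q i ⊆ A' ∧
        ∃ u : U, a = (Vtx.item u, Vtx.path i 0)) ∪
      (Finset.univ.filter fun i : ι => Ppath U ι q i ⊆ A').biUnion (Ppath U ι q)) :
    A'' ⊆ A' ∧ Feasible A'' ∧
    (∀ i : ι, Ppath U ι q i ⊆ A'' ∨ Disjoint (Ppath U ι q i) A'') ∧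
    ∀ k : ℕ, 1 ≤ k → obj k A'' ≤ obj k A' := by
  have hsub : A'' ⊆ A' := by
    rw [hA'']
    intro a ha
    rcases Finset.mem_union.1 ha with h | h
    · exact (Finset.mem_filter.1 h).1
    · obtain ⟨i, hi, hai⟩ := Finset.mem_biUnion.1 h
      exact (Finset.mem_filter.1 hi).2 hai
  have hPin : ∀ i : ι, Ppath U ι q i ⊆ A' → Ppath U ι q i ⊆ A'' := by
    intro i hi a ha
    rw [hA'']
    exact Finset.mem_union_right _ (Finset.mem_biUnion.2 ⟨i, by simp [hi], ha⟩)
  refine ⟨hsub, ?_, ?_, ?_⟩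
  · -- Feasible
    intro u
    have := hfeas u
    rcases Relation.ReflTransGen.cases_head this with heq | ⟨c, hac, hrest⟩
    · exact absurd heq (by simp)
    · have hmem := hA' hac
      simp only [arcs, Finset.mem_union, AU, Finset.mem_biUnion, Finset.mem_univ, true_and,
        Finset.mem_image] at hmem
      rcases hmem with ⟨i, u', _, heq⟩ | ⟨i, hP⟩
      · simp only [Prod.ext_iff, Vtx.item.injEq] at heq
        obtain ⟨-, rfl⟩ := heq
        -- c = path i 0
        have hPA' : Ppath U ι q i ⊆ A' := by
          obtain ⟨h1, h2⟩ := tail_in hA' hrest i 0 rfl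
          intro a ha
          rcases mem_Ppath.1 ha with ⟨j, rfl⟩ | rfl
          · exact h1 j (Fin.zero_le _)
          · exact h2
        have harc : (Vtx.item u, Vtx.path i 0) ∈ A'' := by
          rw [hA'']
          exact Finset.mem_union_left _
            (Finset.mem_filter.2 ⟨hac, i, hPA', u, rfl⟩)
        exact Relation.ReflTransGen.head harc (reach_along (hPin i hPA') 0)
      · exact absurd (Ppath_fst hP) (by simp)
  · -- all-or-nothing
    intro i
    by_cases hi : Ppath U ι q i ⊆ A'
    · exact Or.inl (hPin i hi)
    · right
      rw [Finset.disjoint_left]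
      intro a haP haA
      rw [hA''] at haA
      rcases Finset.mem_union.1 haA with h | h
      · obtain ⟨_, i', _, u, rfl⟩ := Finset.mem_filter.1 h
        exact absurd (Ppath_fst haP) (by simp)
      · obtain ⟨i', hi', hai'⟩ := Finset.mem_biUnion.1 h
        obtain ⟨j1, hj1⟩ := Ppath_fst haP
        obtain ⟨j2, hj2⟩ := Ppath_fst hai'
        have : i = i' := by
          rw [hj1] at hj2
          exact (Vtx.path.injEq .. ▸ hj2 : _ ∧ _).1 |>.symm ▸ rfl
        subst this
        exact hi ((Finset.mem_filter.1 hi').2)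
  · -- objective
    intro k _
    apply Finset.sum_le_sum
    intro v _
    have hdeg : deg A'' v ≤ deg A' v :=
      Nat.add_le_add
        (Finset.card_le_card (Finset.filter_subset_filter _ hsub))
        (Finset.card_le_card (Finset.filter_subset_filter _ hsub))
    simp only [Nat.ceilDiv_eq_add_pred_div]
    exact Nat.div_le_div_right (by omega)
end

section
/- In the graph G constructed from a Set Cover instance with ⋃_{S ∈ 𝒮} S = U and q > 2 · (|𝒮| + Σ_{S ∈ 𝒮} |S|), for every linecard size k ≥ 1, the minimum of |{S ∈ 𝒮 | P_S ⊆ A'}| over all feasible subsets A' ⊆ A equals the minimum size of a set cover of U, i.e., min{|𝒞| : 𝒞 ⊆ 𝒮, ⋃_{S ∈ 𝒞} S = U}. -/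
variable {U ι : Type} [Fintype U] [Fintype ι] [DecidableEq U] [DecidableEq ι]

lemma mem_AU_iff {Sets : ι → Finset U} {q : ℕ} {a b : Vtx U ι q} :
    (a, b) ∈ AU Sets q ↔ ∃ i, ∃ u ∈ Sets i, a = Vtx.item u ∧ b = Vtx.path i 0 := by
  simp [AU, Prod.ext_iff, eq_comm]

lemma mem_Ppath_iff {q : ℕ} {i : ι} {a b : Vtx U ι q} :
    (a, b) ∈ Ppath U ι q i ↔
      (∃ m : Fin q, a = Vtx.path i m.castSucc ∧ b = Vtx.path i m.succ) ∨
      (a = Vtx.path i (Fin.last q) ∧ b = Vtx.sink) := by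
  simp [Ppath, Prod.ext_iff, eq_comm]
  exact or_comm

/-- If all of `Ppath i` lies in `A'`, every path vertex reaches the sink. -/
lemma reach_of_Ppath_subset {q : ℕ} {i : ι} {A' : Finset (Vtx U ι q × Vtx U ι q)}
    (h : Ppath U ι q i ⊆ A') :
    ∀ n (j : Fin (q + 1)), q - j.val ≤ n → Reaches A' (Vtx.path i j) Vtx.sink := by
  intro n
  induction n with
  | zero =>
    intro j hj
    have hjq : j = Fin.last q := by
      have := j.isLt
      have : j.val = q := by omega
      exact Fin.ext this
    subst hjq
    exact Relation.ReflTransGen.single (h (mem_Ppath_iff.mpr (Or.inr ⟨rfl, rfl⟩)))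
  | succ n ih =>
    intro j hj
    by_cases hlt : j.val < q
    · set m : Fin q := ⟨j.val, hlt⟩ with hm
      have hcast : m.castSucc = j := Fin.ext rfl
      have step : (Vtx.path i j, Vtx.path i m.succ) ∈ A' := by
        apply h; rw [mem_Ppath_iff]; exact Or.inl ⟨m, by rw [hcast], rfl⟩
      have hrest : Reaches A' (Vtx.path i m.succ) Vtx.sink := by
        apply ih
        have : (m.succ : Fin (q+1)).val = j.val + 1 := rfl
        omega
      exact Relation.ReflTransGen.head step hrest
    · have hjq : j = Fin.last q := by
        have := j.isLt
        exact Fin.ext (by simp [Fin.last]; omega)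
      subst hjq
      exact Relation.ReflTransGen.single (h (mem_Ppath_iff.mpr (Or.inr ⟨rfl, rfl⟩)))

/-- If a path vertex reaches the sink inside `A' ⊆ arcs`, then the whole tail of the
path (and in particular the sink arc) lies in `A'`. -/
lemma arcs_of_reach {Sets : ι → Finset U} {q : ℕ} {A' : Finset (Vtx U ι q × Vtx U ι q)}
    (hA : A' ⊆ arcs Sets q) (i : ι) :
    ∀ n (j : Fin (q + 1)), q - j.val ≤ n → Reaches A' (Vtx.path i j) Vtx.sink →
      (Vtx.path i (Fin.last q), Vtx.sink) ∈ A' ∧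
      ∀ m : Fin q, j ≤ m.castSucc → (Vtx.path i m.castSucc, Vtx.path i m.succ) ∈ A' := by
  intro n
  induction n with
  | zero =>
    intro j hj hr
    have hjq : j = Fin.last q := by
      have := j.isLt; exact Fin.ext (by simp only [Fin.val_last]; omega)
    subst hjq
    rcases Relation.ReflTransGen.cases_head hr with heq | ⟨w, hw, _⟩
    · exact absurd heq (by simp)
    · have hw' := hA hw
      rcases Finset.mem_union.mp hw' with hw' | hw'
      · rcases mem_AU_iff.mp hw' with ⟨_, _, _, h1, _⟩; exact absurd h1 (by simp)
      · rcases Finset.mem_biUnion.mp hw' with ⟨i', _, hP⟩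
        rcases mem_Ppath_iff.mp hP with ⟨m, h1, _⟩ | ⟨h1, h2⟩
        · have := m.isLt
          simp only [Vtx.path.injEq] at h1
          have : (Fin.last q).val = m.castSucc.val := by rw [h1.2]
          simp [Fin.last] at this; omega
        · simp only [Vtx.path.injEq, and_true] at h1
          refine ⟨by rw [← h2]; exact hw, ?_⟩
          intro m hm
          have := m.isLt
          have : (Fin.last q).val ≤ m.castSucc.val := hm
          simp [Fin.last] at this; omega
  | succ n ih =>
    intro j hj hr
    by_cases hlt : j.val < q
    · rcases Relation.ReflTransGen.cases_head hr with heq | ⟨w, hw, hr'⟩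
      · exact absurd heq (by simp)
      · have hw' := hA hw
        have hwform : ∃ m : Fin q, j = m.castSucc ∧ w = Vtx.path i m.succ := by
          rcases Finset.mem_union.mp hw' with hw' | hw'
          · rcases mem_AU_iff.mp hw' with ⟨_, _, _, h1, _⟩; exact absurd h1 (by simp)
          · rcases Finset.mem_biUnion.mp hw' with ⟨i', _, hP⟩
            rcases mem_Ppath_iff.mp hP with ⟨m, h1, h2⟩ | ⟨h1, _⟩
            · simp only [Vtx.path.injEq] at h1
              exact ⟨m, h1.2, by rw [h2, ← h1.1]⟩
            · simp only [Vtx.path.injEq] at h1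
              have : j.val = q := by rw [h1.2]; rfl
              omega
        rcases hwform with ⟨m, hjm, hwm⟩
        subst hjm; subst hwm
        have hj' : q - (m.val + 1) ≤ n := by
          have hcs : (m.castSucc : Fin (q+1)).val = m.val := rfl
          omega
        have hrec := ih m.succ (by rw [Fin.val_succ]; exact hj') hr'
        refine ⟨hrec.1, ?_⟩
        intro m' hm'
        by_cases hmm : m' = m
        · subst hmm; exact hw
        · apply hrec.2
          have h1 : m.val ≤ m'.val := hm'
          have h2 : m.val ≠ m'.val := fun h => hmm (Fin.ext h.symm)
          show (m.succ : Fin (q+1)).val ≤ m'.castSucc.val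
          have : (m.succ : Fin (q+1)).val = m.val + 1 := rfl
          have : (m'.castSucc : Fin (q+1)).val = m'.val := rfl
          omega
    · -- j = last, same as base case
      have hjq : j = Fin.last q := Fin.ext (by have := j.isLt; simp [Fin.last]; omega)
      subst hjq
      rcases Relation.ReflTransGen.cases_head hr with heq | ⟨w, hw, _⟩
      · exact absurd heq (by simp)
      · have hw' := hA hw
        rcases Finset.mem_union.mp hw' with hw' | hw'
        · rcases mem_AU_iff.mp hw' with ⟨_, _, _, h1, _⟩; exact absurd h1 (by simp)
        · rcases Finset.mem_biUnion.mp hw' with ⟨i', _, hP⟩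
          rcases mem_Ppath_iff.mp hP with ⟨m, h1, _⟩ | ⟨h1, h2⟩
          · have := m.isLt
            simp only [Vtx.path.injEq] at h1
            have : (Fin.last q).val = m.castSucc.val := by rw [h1.2]
            simp [Fin.last] at this; omega
          · simp only [Vtx.path.injEq, and_true] at h1
            refine ⟨by rw [← h2]; exact hw, ?_⟩
            intro m hm
            have := m.isLt
            have : (Fin.last q).val ≤ m.castSucc.val := hm
            simp [Fin.last] at this; omega

/-- From a set cover, a feasible arc set with few full paths. -/
lemma cover_to_feasible (Sets : ι → Finset U) (q : ℕ) (𝒞 : Finset ι)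
    (hcov : ∀ u : U, ∃ i ∈ 𝒞, u ∈ Sets i) :
    ∃ A' ⊆ arcs Sets q, Feasible A' ∧
      (Finset.univ.filter fun i : ι => Ppath U ι q i ⊆ A').card ≤ 𝒞.card := by
  refine ⟨AU Sets q ∪ 𝒞.biUnion (Ppath U ι q), ?_, ?_, ?_⟩
  · exact Finset.union_subset_union_right
      (Finset.biUnion_subset_biUnion_of_subset_left _ (Finset.subset_univ _))
  · intro u
    obtain ⟨i, hi𝒞, hui⟩ := hcov u
    have hPsub : Ppath U ι q i ⊆ AU Sets q ∪ 𝒞.biUnion (Ppath U ι q) :=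
      (Finset.subset_biUnion_of_mem _ hi𝒞).trans Finset.subset_union_right
    refine Relation.ReflTransGen.head ?_ (reach_of_Ppath_subset hPsub q 0 (by simp))
    exact Finset.mem_union_left _ (mem_AU_iff.mpr ⟨i, u, hui, rfl, rfl⟩)
  · apply Finset.card_le_card
    intro i hi
    rw [Finset.mem_filter] at hi
    have hsink : (Vtx.path i (Fin.last q), Vtx.sink) ∈
        AU Sets q ∪ 𝒞.biUnion (Ppath U ι q) :=
      hi.2 (mem_Ppath_iff.mpr (Or.inr ⟨rfl, rfl⟩))
    rcases Finset.mem_union.mp hsink with h | h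
    · rcases mem_AU_iff.mp h with ⟨_, _, _, h1, _⟩; exact absurd h1 (by simp)
    · rcases Finset.mem_biUnion.mp h with ⟨i', hi', hP⟩
      rcases mem_Ppath_iff.mp hP with ⟨m, _, h2⟩ | ⟨h1, _⟩
      · exact absurd h2 (by simp)
      · simp only [Vtx.path.injEq] at h1
        rwa [h1.1]

/-- In the graph `G` constructed from a Set Cover instance with `⋃_{S ∈ 𝒮} S = U` and
`q > 2 · (|𝒮| + Σ_{S ∈ 𝒮} |S|)`, for every linecard size `k ≥ 1`, the minimum of
`|{S ∈ 𝒮 | P_S ⊆ A'}|` over all feasible subsets `A' ⊆ A` equals the minimum size of a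
set cover of `U`. -/
theorem min_active_paths_eq_min_cover (Sets : ι → Finset U) (q : ℕ)
    (hU : ∀ u : U, ∃ i : ι, u ∈ Sets i)
    (hq : q > 2 * (Fintype.card ι + ∑ i : ι, (Sets i).card)) :
    ∀ k : ℕ, 1 ≤ k →
      sInf {n : ℕ | ∃ A' ⊆ arcs Sets q, Feasible A' ∧
          n = (Finset.univ.filter fun i : ι => Ppath U ι q i ⊆ A').card}
        = sInf {n : ℕ | ∃ 𝒞 : Finset ι, (∀ u : U, ∃ i ∈ 𝒞, u ∈ Sets i) ∧ n = 𝒞.card} := by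
  intro k hk
  set F := {n : ℕ | ∃ A' ⊆ arcs Sets q, Feasible A' ∧
      n = (Finset.univ.filter fun i : ι => Ppath U ι q i ⊆ A').card} with hF
  set C := {n : ℕ | ∃ 𝒞 : Finset ι, (∀ u : U, ∃ i ∈ 𝒞, u ∈ Sets i) ∧ n = 𝒞.card} with hC
  have hCne : C.Nonempty := by
    refine ⟨(Finset.univ : Finset ι).card, Finset.univ, fun u => ?_, rfl⟩
    obtain ⟨i, hi⟩ := hU u
    exact ⟨i, Finset.mem_univ i, hi⟩
  have hFne : F.Nonempty := by
    obtain ⟨A', hsub, hfeas, _⟩ := cover_to_feasible Sets q Finset.univ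
      (fun u => by obtain ⟨i, hi⟩ := hU u; exact ⟨i, Finset.mem_univ i, hi⟩)
    exact ⟨_, A', hsub, hfeas, rfl⟩
  apply le_antisymm
  · -- sInf F ≤ sInf C
    obtain ⟨𝒞, hcov, hcard⟩ := Nat.sInf_mem hCne
    obtain ⟨A', hsub, hfeas, hle⟩ := cover_to_feasible Sets q 𝒞 hcov
    calc sInf F ≤ (Finset.univ.filter fun i : ι => Ppath U ι q i ⊆ A').card :=
          Nat.sInf_le ⟨A', hsub, hfeas, rfl⟩
      _ ≤ 𝒞.card := hle
      _ = sInf C := hcard.symm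
  · -- sInf C ≤ sInf F
    obtain ⟨A', hsub, hfeas, hcard⟩ := Nat.sInf_mem hFne
    apply Nat.sInf_le
    refine ⟨Finset.univ.filter fun i : ι => Ppath U ι q i ⊆ A', fun u => ?_, hcard⟩
    have hr := hfeas u
    rcases Relation.ReflTransGen.cases_head hr with heq | ⟨w, hw, hr'⟩
    · exact absurd heq (by simp)
    · have hw' := hsub hw
      have : ∃ i, u ∈ Sets i ∧ w = Vtx.path i 0 := by
        rcases Finset.mem_union.mp hw' with h | h
        · rcases mem_AU_iff.mp h with ⟨i, u', hu', h1, h2⟩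
          simp only [Vtx.item.injEq] at h1
          exact ⟨i, by rwa [h1], h2⟩
        · rcases Finset.mem_biUnion.mp h with ⟨i', _, hP⟩
          rcases mem_Ppath_iff.mp hP with ⟨m, h1, _⟩ | ⟨h1, _⟩ <;> exact absurd h1 (by simp)
      obtain ⟨i, hui, hwi⟩ := this
      subst hwi
      have hfull := arcs_of_reach hsub i q 0 (by simp) hr'
      refine ⟨i, Finset.mem_filter.mpr ⟨Finset.mem_univ i, ?_⟩, hui⟩
      intro a ha
      obtain ⟨a1, a2⟩ := a
      rcases mem_Ppath_iff.mp ha with ⟨m, h1, h2⟩ | ⟨h1, h2⟩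
      · rw [h1, h2]; exact hfull.2 m (Fin.zero_le _)
      · rw [h1, h2]; exact hfull.1
end
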